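/- Let λ ∈ ℂ and δ ∈ ℂ with δ ≠ 0, and let M be the 5×5 complex matrix J₃(λ) ⊕ J₂(λ) + δ·E_{3,1}, where E_{3,1} is the matrix unit with 1 in position (3,1) and 0 elsewhere. Then there exist pairwise distinct complex numbers μ₁, μ₂, μ₃, each different from λ, such that M is similar to diag(μ₁, μ₂, μ₃) ⊕ J₂(λ). -/

import Mathlib

open Matrix

/-- Perturbing `J₃(λ) ⊕ J₂(λ)` by `δ` in position `(3,1)` (1-indexed) with `δ ≠ 0` yields a
matrix similar to `diag(μ₁, μ₂, μ₃) ⊕ J₂(λ)` for some pairwise distinct `μ₁, μ₂, μ₃`,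
each different from `λ`. -/
theorem perturbed_J3_J2_similar_diag_J2 (lam δ : ℂ) (hδ : δ ≠ 0) :
    ∃ μ₁ μ₂ μ₃ : ℂ, μ₁ ≠ μ₂ ∧ μ₁ ≠ μ₃ ∧ μ₂ ≠ μ₃ ∧
      μ₁ ≠ lam ∧ μ₂ ≠ lam ∧ μ₃ ≠ lam ∧
      ∃ S : Matrix (Fin 5) (Fin 5) ℂ, IsUnit S ∧
        S⁻¹ * !![lam, 1, 0, 0, 0;
                 0, lam, 1, 0, 0;
                 δ, 0, lam, 0, 0;
                 0, 0, 0, lam, 1;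
                 0, 0, 0, 0, lam] * S =
          !![μ₁, 0, 0, 0, 0;
             0, μ₂, 0, 0, 0;
             0, 0, μ₃, 0, 0;
             0, 0, 0, lam, 1;
             0, 0, 0, 0, lam] := by
  obtain ⟨ω, hω⟩ : ∃ ω : ℂ, IsPrimitiveRoot ω 3 :=
    ⟨_, Complex.isPrimitiveRoot_exp 3 (by norm_num)⟩
  set c : ℂ := δ ^ ((3 : ℂ)⁻¹) with hcdef
  have hc3 : c ^ 3 = δ := by
    have h := Complex.cpow_nat_inv_pow δ (n := 3) (by norm_num)
    rw [hcdef]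
    norm_num at h ⊢
    exact h
  have hc0 : c ≠ 0 := by
    intro h
    apply hδ
    rw [← hc3, h]; ring
  have hω3 : ω ^ 3 = 1 := hω.pow_eq_one
  have hωne1 : ω ≠ 1 := hω.ne_one (by norm_num)
  have hω2ne1 : ω ^ 2 ≠ 1 := hω.pow_ne_one_of_pos_of_lt (by norm_num) (by norm_num)
  have hω0 : ω ≠ 0 := by
    intro h; rw [h] at hω3; simp at hω3
  set t₁ : ℂ := c with ht₁def
  set t₂ : ℂ := ω * c with ht₂def
  set t₃ : ℂ := ω ^ 2 * c with ht₃def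
  refine ⟨lam + t₁, lam + t₂, lam + t₃, ?_, ?_, ?_, ?_, ?_, ?_, ?_⟩
  · intro h
    have h2 : t₁ = t₂ := add_left_cancel h
    exact hωne1 (mul_right_cancel₀ hc0 (by rw [ht₁def, ht₂def] at h2; linear_combination -h2))
  · intro h
    have h2 : t₁ = t₃ := add_left_cancel h
    exact hω2ne1 (mul_right_cancel₀ hc0 (by rw [ht₁def, ht₃def] at h2; linear_combination -h2))
  · intro h
    have h2 : t₂ = t₃ := add_left_cancel h
    apply hωne1
    apply mul_left_cancel₀ hω0
    apply mul_right_cancel₀ hc0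
    rw [ht₂def, ht₃def] at h2
    linear_combination -h2
  · intro h
    have h2 : t₁ = 0 := by linear_combination h
    exact hc0 h2
  · intro h
    have h2 : ω * c = 0 := by linear_combination h
    simp [hω0, hc0] at h2
    exact hc0 h2
  · intro h
    have h2 : ω ^ 2 * c = 0 := by linear_combination h
    simp [hω0, hc0] at h2
    exact hc0 h2
  · set S : Matrix (Fin 5) (Fin 5) ℂ :=
      !![1, 1, 1, 0, 0;
         t₁, t₂, t₃, 0, 0;
         t₁ ^ 2, t₂ ^ 2, t₃ ^ 2, 0, 0;
         0, 0, 0, 1, 0;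
         0, 0, 0, 0, 1] with hSdef
    have h12 : t₂ - t₁ ≠ 0 := by
      rw [ht₂def]
      intro h
      exact hωne1 (mul_right_cancel₀ hc0 (by linear_combination h))
    have h13 : t₃ - t₁ ≠ 0 := by
      rw [ht₃def]
      intro h
      exact hω2ne1 (mul_right_cancel₀ hc0 (by linear_combination h))
    have h23 : t₃ - t₂ ≠ 0 := by
      rw [ht₂def, ht₃def]
      intro h
      apply hωne1
      apply mul_left_cancel₀ hω0
      apply mul_right_cancel₀ hc0
      linear_combination h
    have hdet : S.det = (t₂ - t₁) * (t₃ - t₁) * (t₃ - t₂) := by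
      rw [hSdef]
      simp [Matrix.det_succ_row_zero, Fin.sum_univ_succ, Fin.succAbove]
      ring
    have hdetu : IsUnit S.det := by
      rw [hdet]
      exact (mul_ne_zero (mul_ne_zero h12 h13) h23).isUnit
    have key : !![lam, 1, 0, 0, 0;
                 0, lam, 1, 0, 0;
                 δ, 0, lam, 0, 0;
                 0, 0, 0, lam, 1;
                 0, 0, 0, 0, lam] * S =
        S * !![lam + t₁, 0, 0, 0, 0;
             0, lam + t₂, 0, 0, 0;
             0, 0, lam + t₃, 0, 0;
             0, 0, 0, lam, 1;
             0, 0, 0, 0, lam] := by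
      rw [← hc3, hSdef]
      ext i j
      fin_cases i <;> fin_cases j <;>
        simp [Matrix.mul_apply, Fin.sum_univ_five, ht₂def, ht₃def, Matrix.vecHead,
          Matrix.vecTail, Function.comp]
      all_goals (ring_nf at hω3 ⊢ <;>
        first
          | rfl
          | linear_combination -t₁ ^ 3 * hω3
          | linear_combination -t₁ ^ 3 * (ω ^ 3 + 1) * hω3)
    refine ⟨S, (Matrix.isUnit_iff_isUnit_det S).mpr hdetu, ?_⟩
    rw [mul_assoc, key, ← mul_assoc, Matrix.nonsing_inv_mul S hdetu, one_mul]
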